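/- arXiv:2405.09068 — 7 statements merged into one kernel-verified Lean document; each statement's English description precedes it below -/
import Mathlib

section
/- For a prime p and positive integers k, l with t = gcd(k,l): gcd(p^k + 1, p^l + 1) = p^t + 1 if both k/t and l/t are odd; gcd(p^k + 1, p^l + 1) = 2 if (k/t is even or l/t is even) and p > 2; and gcd(p^k + 1, p^l + 1) = 1 if (k/t is even or l/t is even) and p = 2. -/
theorem stmt_2 (p k l : ℕ) (hp : p.Prime) (hk : 0 < k) (hl : 0 < l) :
    (Odd (k / Nat.gcd k l) → Odd (l / Nat.gcd k l) →
      Nat.gcd (p ^ k + 1) (p ^ l + 1) = p ^ Nat.gcd k l + 1) ∧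
    ((Even (k / Nat.gcd k l) ∨ Even (l / Nat.gcd k l)) → 2 < p →
      Nat.gcd (p ^ k + 1) (p ^ l + 1) = 2) ∧
    ((Even (k / Nat.gcd k l) ∨ Even (l / Nat.gcd k l)) → p = 2 →
      Nat.gcd (p ^ k + 1) (p ^ l + 1) = 1) := by
  set t := Nat.gcd k l with ht
  set g := Nat.gcd (p ^ k + 1) (p ^ l + 1) with hg
  set m := k / t with hm
  set n := l / t with hn
  have hp0 : 0 < p := hp.pos
  have ht0 : 0 < t := Nat.gcd_pos_of_pos_left _ hk
  have hkt : t * m = k := Nat.mul_div_cancel' (Nat.gcd_dvd_left k l)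
  have hlt : t * n = l := Nat.mul_div_cancel' (Nat.gcd_dvd_right k l)
  have hcop : Nat.Coprime m n := Nat.coprime_div_gcd_div_gcd ht0
  have hg0 : g ≠ 0 := by
    have : 0 < g := Nat.gcd_pos_of_pos_left _ (Nat.succ_le_succ (Nat.zero_le _))
    omega
  haveI : NeZero g := ⟨hg0⟩
  have hgk : ((p ^ k + 1 : ℕ) : ZMod g) = 0 := by
    rw [ZMod.natCast_eq_zero_iff]
    exact Nat.gcd_dvd_left _ _
  have hgl : ((p ^ l + 1 : ℕ) : ZMod g) = 0 := by
    rw [ZMod.natCast_eq_zero_iff]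
    exact Nat.gcd_dvd_right _ _
  set y : ZMod g := (p : ZMod g) ^ t with hy
  have hym : y ^ m = -1 := by
    push_cast at hgk
    rw [hy, ← pow_mul, hkt]
    linear_combination hgk
  have hyn : y ^ n = -1 := by
    push_cast at hgl
    rw [hy, ← pow_mul, hlt]
    linear_combination hgl
  have hy2 : y ^ 2 = 1 := by
    rw [← orderOf_dvd_iff_pow_eq_one]
    have h1 : orderOf y ∣ m * 2 := by
      apply orderOf_dvd_of_pow_eq_one
      rw [pow_mul, hym]; ring
    have h2 : orderOf y ∣ n * 2 := by
      apply orderOf_dvd_of_pow_eq_one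
      rw [pow_mul, hyn]; ring
    have := Nat.dvd_gcd h1 h2
    rwa [Nat.gcd_mul_right, hcop, one_mul] at this
  have h2dvd : (Even m ∨ Even n) → g ∣ 2 := by
    intro he
    have hone : (1 : ZMod g) = -1 := by
      rcases he with he | he
      · obtain ⟨j, hj⟩ := he
        rw [← hym, hj, ← two_mul, pow_mul, hy2, one_pow]
      · obtain ⟨j, hj⟩ := he
        rw [← hyn, hj, ← two_mul, pow_mul, hy2, one_pow]
    have : ((2 : ℕ) : ZMod g) = 0 := by
      push_cast
      linear_combination hone
    rwa [ZMod.natCast_eq_zero_iff] at this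
  refine ⟨?_, ?_, ?_⟩
  · intro hok hol
    obtain ⟨j, hj⟩ := id hok
    have hyval : y = -1 := by
      have : y ^ m = y := by
        rw [hj, pow_add, pow_mul, hy2, one_pow, pow_one, one_mul]
      rw [← this, hym]
    have hdvd1 : g ∣ p ^ t + 1 := by
      have : ((p ^ t + 1 : ℕ) : ZMod g) = 0 := by
        push_cast
        rw [← hy, hyval]; ring
      rwa [ZMod.natCast_eq_zero_iff] at this
    have hdvd2 : p ^ t + 1 ∣ g := by
      apply Nat.dvd_gcd
      · have := hok.nat_add_dvd_pow_add_pow (p ^ t) 1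
        rwa [← pow_mul, hkt, one_pow] at this
      · have := hol.nat_add_dvd_pow_add_pow (p ^ t) 1
        rwa [← pow_mul, hlt, one_pow] at this
    exact Nat.dvd_antisymm hdvd1 hdvd2
  · intro he hp2
    have hg2 := h2dvd he
    have hpodd : Odd p := hp.odd_of_ne_two (by omega)
    have h2g : 2 ∣ g := by
      apply Nat.dvd_gcd
      · exact (hpodd.pow).add_one.two_dvd
      · exact (hpodd.pow).add_one.two_dvd
    exact Nat.dvd_antisymm hg2 h2g
  · intro he hp2
    subst hp2
    have hg2 := h2dvd he
    have hnot : ¬ 2 ∣ g := by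
      intro h
      have : 2 ∣ 2 ^ k + 1 := h.trans (Nat.gcd_dvd_left _ _)
      have h2k : 2 ∣ 2 ^ k := dvd_pow_self 2 (by omega)
      omega
    have hle : g ≤ 2 := Nat.le_of_dvd (by omega) hg2
    have hge : 1 ≤ g := Nat.one_le_iff_ne_zero.mpr hg0
    interval_cases g
    · rfl
    · exact absurd (dvd_refl 2) hnot
end

section
/- Let L be a finite field and σ a field automorphism of L given by σ(x) = x^q for a prime power q. Let T be the semilinear transformation of L² given by T(x₀, x₁) = (α·σ(x₁), σ(x₀) + β·σ(x₁)) with α ≠ 0. Then T has a nonzero eigenvector, i.e., there exist a nonzero vector v ∈ L² and k ∈ L with T(v) = k·v, if and only if the polynomial P(X) = X^(q+1) − β·X − α has a root in L. -/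
lemma neg_pow_frob {L : Type*} [Field L] [Fintype L] (q : ℕ)
    (hq : ∃ n : ℕ, q = ringChar L ^ n) (x : L) : (-x) ^ q = -(x ^ q) := by
  obtain ⟨n, rfl⟩ := hq
  have hp : (ringChar L).Prime := CharP.char_is_prime L (ringChar L)
  rcases hp.eq_two_or_odd' with h2 | hodd
  · haveI : CharP L 2 := h2 ▸ ringChar.charP L
    rw [CharTwo.neg_eq, CharTwo.neg_eq]
  · exact (hodd.pow).neg_pow x

lemma neg_pow_frob_succ {L : Type*} [Field L] [Fintype L] (q : ℕ)
    (hq : ∃ n : ℕ, q = ringChar L ^ n) (x : L) : (-x) ^ (q + 1) = x ^ (q + 1) := by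
  rw [pow_succ, pow_succ, neg_pow_frob q hq, neg_mul_neg]

theorem stmt_3 {L : Type*} [Field L] [Fintype L] (q : ℕ)
    (hq : ∃ n : ℕ, q = ringChar L ^ n) (α β : L) (hα : α ≠ 0) :
    (∃ v : L × L, v ≠ 0 ∧ ∃ k : L,
        ((α * v.2 ^ q, v.1 ^ q + β * v.2 ^ q) : L × L) = k • v) ↔
      ∃ X : L, X ^ (q + 1) - β * X - α = 0 := by
  have hq0 : q ≠ 0 := by
    obtain ⟨n, rfl⟩ := hq
    exact pow_ne_zero n (CharP.char_is_prime L (ringChar L)).ne_zero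
  constructor
  · rintro ⟨⟨v₁, v₂⟩, hv, k, heq⟩
    have h1 : α * v₂ ^ q = k * v₁ := congrArg Prod.fst heq
    have h2 : v₁ ^ q + β * v₂ ^ q = k * v₂ := congrArg Prod.snd heq
    have hv2 : v₂ ≠ 0 := by
      intro h
      subst h
      simp only [ne_eq, zero_pow hq0, mul_zero, add_zero] at h1 h2
      have : v₁ = 0 := pow_eq_zero_iff hq0 |>.mp (h2.trans (by ring))
      exact hv (by simp [this, Prod.ext_iff])
    refine ⟨-(v₁ / v₂), ?_⟩
    rw [neg_pow_frob_succ q hq]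
    have key : v₁ ^ (q + 1) = α * v₂ ^ (q + 1) - β * v₁ * v₂ ^ q := by
      linear_combination v₁ * h2 - v₂ * h1
    field_simp
    rw [div_pow, key]
    field_simp
    ring
  · rintro ⟨X, hX⟩
    refine ⟨(-X, 1), by simp [Prod.ext_iff], -X ^ q + β, ?_⟩
    have := neg_pow_frob q hq X
    simp only [Prod.smul_mk, smul_eq_mul, Prod.mk.injEq, one_pow, mul_one]
    constructor
    · linear_combination -hX
    · linear_combination this
end

section
/- Let L = F_{p^m} with p odd, σ(x) = x^(p^k), τ(x) = x^(p^l) automorphisms of L, and suppose m/gcd(m,k,l) is such that gcd(m,l)/gcd(m,k,l) is odd or k ≡ 0 (mod m). If α ∈ L* is a non-square, then for every a ∈ L* the polynomial a^(p^l)·X^(p^k+1) − a·α has no root in L. -/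
theorem stmt_7 (p m k l : ℕ) (hp : p.Prime) (hodd : Odd p) (hk : k < m) (hl : l < m)
    (hcond : k = 0 ∨ Odd (Nat.gcd m l / Nat.gcd m (Nat.gcd k l)))
    {L : Type*} [Field L] [Fintype L] (hL : Fintype.card L = p ^ m)
    (α : L) (hα : α ≠ 0) (hns : ¬ ∃ β : L, α = β ^ 2) :
    ∀ a : L, a ≠ 0 → ∀ X : L, a ^ p ^ l * X ^ (p ^ k + 1) - a * α ≠ 0 := by
  intro a ha X heq
  apply hns
  have h' : a ^ p ^ l * X ^ (p ^ k + 1) = a * α := sub_eq_zero.mp heq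
  have hpl : Odd (p ^ l) := hodd.pow
  have hpk : Odd (p ^ k) := hodd.pow
  have hplpos : 1 ≤ p ^ l := Nat.one_le_pow _ _ hp.pos
  have hevl : Even (p ^ l - 1) := Nat.Odd.sub_odd hpl odd_one
  have hevk : Even (p ^ k + 1) := hpk.add_one
  have hX : X ≠ 0 := by
    intro hx
    rw [hx, zero_pow (Nat.succ_ne_zero _), mul_zero] at h'
    exact mul_ne_zero ha hα h'.symm
  have hsplit : a ^ p ^ l = a * a ^ (p ^ l - 1) := by
    rw [← pow_succ', Nat.sub_add_cancel hplpos]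
  have hα' : α = a ^ (p ^ l - 1) * X ^ (p ^ k + 1) := by
    have := h'
    rw [hsplit, mul_assoc] at this
    exact (mul_left_cancel₀ ha this).symm
  refine ⟨a ^ ((p ^ l - 1) / 2) * X ^ ((p ^ k + 1) / 2), ?_⟩
  rw [hα', mul_pow, ← pow_mul, ← pow_mul,
    Nat.div_mul_cancel hevl.two_dvd, Nat.div_mul_cancel hevk.two_dvd]
end

section
/- Let L = F_{p^m} with m > 2 and (p, m) ≠ (2, 6). Then there exists a prime p' dividing p^m − 1 that does not divide p^t − 1 for any 1 ≤ t < m (a p-primitive prime divisor of p^m − 1). -/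
namespace Zsig11

open Polynomial


-- product of cyclotomics over divisors, evaluated
lemma eval_prod_cyclotomic {n : ℕ} (hn : 0 < n) (x : ℤ) :
    ∏ d ∈ n.divisors, (cyclotomic d ℤ).eval x = x ^ n - 1 := by
  have := prod_cyclotomic_eq_X_pow_sub_one hn ℤ
  apply_fun Polynomial.eval x at this
  simpa [Polynomial.eval_prod] using this

-- key divisibility: (x^D - 1) * Φ_m(x) ∣ x^m - 1 for D proper divisor
lemma aux_dvd {D n : ℕ} (hD : D ∣ n) (hDlt : D < n) (h0 : 0 < D) (x : ℤ) :
    (x ^ D - 1) * (cyclotomic n ℤ).eval x ∣ x ^ n - 1 := by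
  have hn : 0 < n := h0.trans hDlt
  rw [← eval_prod_cyclotomic hn x, ← eval_prod_cyclotomic h0 x]
  have hsub : insert n D.divisors ⊆ n.divisors := by
    intro d hd
    rcases Finset.mem_insert.mp hd with rfl | hd
    · exact Nat.mem_divisors.mpr ⟨dvd_rfl, hn.ne'⟩
    · exact Nat.mem_divisors.mpr ⟨(Nat.mem_divisors.mp hd).1.trans hD, hn.ne'⟩
  have hnmem : n ∉ D.divisors := fun h => absurd (Nat.le_of_dvd h0 (Nat.mem_divisors.mp h).1) (by omega)
  calc (∏ d ∈ D.divisors, (cyclotomic d ℤ).eval x) * (cyclotomic n ℤ).eval x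
      = ∏ d ∈ insert n D.divisors, (cyclotomic d ℤ).eval x := by
        rw [Finset.prod_insert hnmem]; ring
    _ ∣ ∏ d ∈ n.divisors, (cyclotomic d ℤ).eval x :=
        Finset.prod_dvd_prod_of_subset _ _ _ hsub

-- the inequality lemma
lemma aux_core {Y q : ℕ} (hY : 2 ≤ Y) (hq : 3 ≤ q) (h : ¬(Y = 2 ∧ q = 3)) :
    q * (Y + 1) + 1 < Y ^ q := by
  rcases eq_or_lt_of_le hY with rfl | hY3
  · -- Y = 2, q ≥ 4
    have hq4 : 4 ≤ q := by omega
    clear h hq hY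
    induction q with
    | zero => omega
    | succ n ih =>
      rcases Nat.lt_or_ge n 4 with hn | hn
      · interval_cases n <;> first | omega | norm_num
      · have := ih (by omega)
        have h2 : 2 ^ n ≥ 5 := by
          calc 2 ^ n ≥ 2 ^ 4 := Nat.pow_le_pow_right (by norm_num) hn
          _ ≥ 5 := by norm_num
        rw [pow_succ]
        omega
  · -- Y ≥ 3
    have hY3' : 3 ≤ Y := hY3
    clear h hY
    induction q with
    | zero => omega
    | succ n ih =>
      rcases Nat.lt_or_ge n 3 with hn | hn
      · have hn3 : n = 2 := by omega
        subst hn3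
        have : Y ^ 3 ≥ 3 * Y ^ 2 := by
          calc Y ^ 3 = Y * Y ^ 2 := by ring
          _ ≥ 3 * Y ^ 2 := Nat.mul_le_mul_right _ hY3'
        have h2 : Y ^ 2 ≥ 3 * Y := by nlinarith
        have hgoal : 3 * (Y + 1) + 1 < Y ^ 3 := by nlinarith
        simpa using hgoal
      · have := ih (by omega)
        have h2 : Y ^ n ≥ Y + 2 := by
          have : n * (Y+1) + 1 ≥ Y + 2 := by nlinarith
          omega
        rw [pow_succ]
        nlinarith [pow_pos (by omega : 0 < Y) n]

lemma aux_ineq {Y q s : ℕ} (hY : 2 ≤ Y) (hq : 3 ≤ q) (hs : 1 ≤ s) (h : ¬(Y = 2 ∧ q = 3)) :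
    q * (Y + 1) ^ s < (Y ^ q - 1) ^ s := by
  have hcore := aux_core hY hq h
  calc q * (Y + 1) ^ s ≤ q ^ s * (Y + 1) ^ s := by
        exact Nat.mul_le_mul_right _ (Nat.le_self_pow (by omega) q)
    _ = (q * (Y + 1)) ^ s := (mul_pow q (Y+1) s).symm
    _ < (Y ^ q - 1) ^ s := Nat.pow_lt_pow_left (by omega) (by omega)


lemma dvd_pow_sub_one_iff {q p : ℕ} (hp : 1 ≤ p) (s : ℕ) :
    q ∣ p ^ s - 1 ↔ ((p : ZMod q)) ^ s = 1 := by
  have h1 : 1 ≤ p ^ s := Nat.one_le_pow _ _ hp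
  rw [← Nat.modEq_iff_dvd' h1]
  constructor
  · intro h
    have := (ZMod.natCast_eq_natCast_iff _ _ _).mpr h
    push_cast at this
    exact this.symm
  · intro h
    have : ((1 : ℕ) : ZMod q) = ((p ^ s : ℕ) : ZMod q) := by push_cast; exact h.symm
    exact (ZMod.natCast_eq_natCast_iff _ _ _).mp this

-- if q prime divides Φ_m(p) and q ∤ m then orderOf (p : ZMod q) = m
lemma order_eq_of_root {q m p : ℕ} (hq : q.Prime) (hm : 0 < m) (hqm : ¬ q ∣ m)
    (hdvd : (q : ℤ) ∣ (cyclotomic m ℤ).eval (p : ℤ)) :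
    orderOf ((p : ℕ) : ZMod q) = m := by
  haveI : Fact q.Prime := ⟨hq⟩
  have hroot : IsRoot (cyclotomic m (ZMod q)) ((p : ℕ) : ZMod q) := by
    have h0 : (((cyclotomic m ℤ).eval (p : ℤ) : ℤ) : ZMod q) = 0 :=
      (ZMod.intCast_zmod_eq_zero_iff_dvd _ q).mpr hdvd
    rw [IsRoot.def, ← map_cyclotomic_int m (ZMod q),
      show ((p : ℕ) : ZMod q) = (((p : ℕ) : ℤ) : ZMod q) by push_cast; ring,
      eval_intCast_map, Int.coe_castRingHom]
    exact_mod_cast h0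
  haveI : NeZero ((m : ℕ) : ZMod q) := NeZero.of_not_dvd (ZMod q) hqm
  exact ((isRoot_cyclotomic_iff.mp hroot).eq_orderOf).symm

-- nat cast
lemma cast_pow_sub_one {p : ℕ} (hp : 1 ≤ p) (n : ℕ) :
    ((p ^ n - 1 : ℕ) : ℤ) = (p : ℤ) ^ n - 1 := by
  have : 1 ≤ p ^ n := Nat.one_le_pow _ _ hp
  push_cast [Nat.cast_sub this]
  ring

lemma aux_dvd_nat {p D n : ℕ} (hp : 2 ≤ p) (hD : D ∣ n) (hDlt : D < n) (h0 : 0 < D) :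
    (p ^ D - 1) * ((cyclotomic n ℤ).eval (p : ℤ)).toNat ∣ p ^ n - 1 := by
  have hpos : 0 < (cyclotomic n ℤ).eval (p : ℤ) := cyclotomic_pos' n (by exact_mod_cast hp)
  rw [← Int.natCast_dvd_natCast]
  push_cast [cast_pow_sub_one (by omega : 1 ≤ p), Int.toNat_of_nonneg hpos.le]
  exact aux_dvd hD hDlt h0 _

lemma phi_dvd_nat {p n : ℕ} (hp : 2 ≤ p) (hn : 0 < n) :
    ((cyclotomic n ℤ).eval (p : ℤ)).toNat ∣ p ^ n - 1 := by
  have h := prod_cyclotomic_eq_X_pow_sub_one hn ℤ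
  apply_fun Polynomial.eval (p : ℤ) at h
  simp only [Polynomial.eval_prod, eval_sub, eval_pow, eval_X, eval_one] at h
  have hd : (cyclotomic n ℤ).eval (p : ℤ) ∣ (p : ℤ) ^ n - 1 := by
    rw [← h]
    exact Finset.dvd_prod_of_mem _ (Nat.mem_divisors.mpr ⟨dvd_rfl, hn.ne'⟩)
  have h0 : 0 < (cyclotomic n ℤ).eval (p : ℤ) := cyclotomic_pos' n (by exact_mod_cast hp)
  rw [← Int.natCast_dvd_natCast, cast_pow_sub_one (by omega : 1 ≤ p), Int.toNat_of_nonneg h0.le]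
  exact hd

/-- Structure of a non-primitive prime divisor of `Φ_m(p)`. -/
lemma structure_lemma (p m : ℕ) (hp : 2 ≤ p) (hm : 2 < m) {r : ℕ} (hr : r.Prime)
    (hrPhi : r ∣ ((cyclotomic m ℤ).eval (p : ℤ)).toNat)
    {t : ℕ} (ht1 : 1 ≤ t) (htm : t < m) (hrt : r ∣ p ^ t - 1) :
    ∃ e k, orderOf ((p : ℕ) : ZMod r) = e ∧ e ∣ r - 1 ∧ ¬ r ∣ e ∧ r ∣ m ∧
      1 ≤ e ∧ r ∣ p ^ e - 1 ∧ 1 ≤ k ∧ m = e * r ^ k := by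
  haveI : Fact r.Prime := ⟨hr⟩
  have hp1 : 1 ≤ p := by omega
  have hm0 : 0 < m := by omega
  set e := orderOf ((p : ℕ) : ZMod r) with he_def
  have key : ∀ s, r ∣ p ^ s - 1 ↔ e ∣ s := fun s => by
    rw [dvd_pow_sub_one_iff hp1, ← orderOf_dvd_iff_pow_eq_one]
  have het : e ∣ t := (key t).mp hrt
  have he1 : 1 ≤ e := by
    rcases Nat.eq_zero_or_pos e with h0 | h1
    · rw [h0] at het; omega
    · exact h1
  have helt : e < m := lt_of_le_of_lt (Nat.le_of_dvd (by omega) het) htm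
  have hevalpos : 0 < (cyclotomic m ℤ).eval (p : ℤ) :=
    cyclotomic_pos' m (by exact_mod_cast hp)
  have hrPhiZ : (r : ℤ) ∣ (cyclotomic m ℤ).eval (p : ℤ) := by
    have := Int.natCast_dvd_natCast.mpr hrPhi
    rwa [Int.toNat_of_nonneg hevalpos.le] at this
  have hrm' : r ∣ p ^ m - 1 := hrPhi.trans (phi_dvd_nat hp hm0)
  have hem : e ∣ m := (key m).mp hrm'
  have hrp : ¬ r ∣ p := by
    intro hdvd
    have h1 := (dvd_pow_sub_one_iff hp1 t).mp hrt
    have h0 : ((p : ℕ) : ZMod r) = 0 := (ZMod.natCast_eq_zero_iff p r).mpr hdvd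
    rw [h0, zero_pow (by omega : t ≠ 0)] at h1
    exact zero_ne_one h1
  have hrdvdm : r ∣ m := by
    by_contra hnd
    exact absurd (order_eq_of_root hr hm0 hnd hrPhiZ) (by omega)
  have hpne : ((p : ℕ) : ZMod r) ≠ 0 := fun h =>
    hrp ((ZMod.natCast_eq_zero_iff p r).mp h)
  have herm1 : e ∣ r - 1 := ZMod.orderOf_dvd_card_sub_one hpne
  have hre : ¬ r ∣ e := by
    intro h
    have h1 := Nat.le_of_dvd (by omega) h
    have h2 := Nat.le_of_dvd (by have := hr.two_le; omega) herm1
    omega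
  have hrpe : r ∣ p ^ e - 1 := (key e).mpr dvd_rfl
  -- now the main claim : m / e is a power of r
  obtain ⟨u, hue⟩ := hem
  have hu1 : 1 ≤ u := by
    rcases Nat.eq_zero_or_pos u with h0 | h1
    · rw [h0, mul_zero] at hue; omega
    · exact h1
  set a := padicValNat r u with ha_def
  have hra : r ∣ u := by
    rcases (hr.dvd_mul.mp (hue ▸ hrdvdm)) with h | h
    · exact absurd h hre
    · exact h
  have ha1 : 1 ≤ a := one_le_padicValNat_of_dvd (by omega) hra
  refine ⟨e, a, rfl, herm1, hre, hrdvdm, he1, hrpe, ha1, ?_⟩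
  -- suffices u = r ^ a
  suffices hu : u = r ^ a by rw [hue, hu]
  by_contra hu
  have hpow_dvd : r ^ a ∣ u := pow_padicValNat_dvd
  have hralt : r ^ a < u := lt_of_le_of_ne (Nat.le_of_dvd (by omega) hpow_dvd) (fun h => hu h.symm)
  set D := e * r ^ a with hD_def
  have hDdvd : D ∣ m := by rw [hue]; exact mul_dvd_mul_left e hpow_dvd
  have hDlt : D < m := by
    rw [hue]
    exact mul_lt_mul_of_pos_left hralt (by omega)
  have hD1 : 0 < D := Nat.mul_pos (by omega) (pow_pos hr.pos a)
  -- valuations agree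
  have hval : padicValNat r (p ^ m - 1) = padicValNat r (p ^ D - 1) := by
    rcases hr.eq_two_or_odd' with rfl | hodd
    · -- r = 2, e = 1
      have he' : e = 1 := Nat.eq_one_of_dvd_one herm1
      have hmu : m = u := by rw [hue, he', one_mul]
      have hD' : D = 2 ^ a := by rw [hD_def, he', one_mul]
      have hpodd : ¬ 2 ∣ p := hrp
      have h2p1 : 2 ∣ p - 1 := by omega
      have hmeven : 2 ∣ m := hrdvdm
      have hDeven : 2 ∣ D := by rw [hD']; exact dvd_pow_self 2 (by omega)
      have h1 := padicValNat.pow_two_sub_pow (x := p) (y := 1) (by omega) (by simpa using h2p1)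
        hpodd (by omega) (even_iff_two_dvd.mpr hmeven)
      have h2 := padicValNat.pow_two_sub_pow (x := p) (y := 1) (by omega) (by simpa using h2p1)
        hpodd (by omega) (even_iff_two_dvd.mpr hDeven)
      simp only [one_pow] at h1 h2
      have hvm : padicValNat 2 m = padicValNat 2 D := by
        rw [hD', padicValNat.prime_pow, hmu]
      omega
    · -- r odd
      have hyx : 1 < p ^ e := Nat.one_lt_pow (by omega) hp
      have hx : ¬ r ∣ p ^ e := fun h => hrp (hr.dvd_of_dvd_pow h)
      have h1 := padicValNat.pow_sub_pow (p := r) hodd (x := p ^ e) (y := 1) hyx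
        (by simpa using hrpe) hx (n := u) (by omega)
      have h2 := padicValNat.pow_sub_pow (p := r) hodd (x := p ^ e) (y := 1) hyx
        (by simpa using hrpe) hx (n := r ^ a) (pow_pos hr.pos a).ne'
      simp only [one_pow, ← pow_mul] at h1 h2
      rw [show e * u = m from hue.symm] at h1
      rw [show e * r ^ a = D from hD_def.symm] at h2
      rw [h1, h2, padicValNat.prime_pow]
  -- contradiction with divisibility
  have hprod := aux_dvd_nat hp hDdvd hDlt hD1
  have hdvd2 : (p ^ D - 1) * r ∣ p ^ m - 1 :=
    (mul_dvd_mul_left _ hrPhi).trans hprod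
  have hmne : p ^ m - 1 ≠ 0 := by
    have h2 : p ≤ p ^ m := Nat.le_self_pow (by omega) p
    omega
  have hfin : r ^ (padicValNat r (p ^ D - 1) + 1) ∣ p ^ m - 1 := by
    calc r ^ (padicValNat r (p ^ D - 1) + 1)
        = r ^ padicValNat r (p ^ D - 1) * r := by rw [pow_succ]
      _ ∣ (p ^ D - 1) * r := mul_dvd_mul_right pow_padicValNat_dvd r
      _ ∣ p ^ m - 1 := hdvd2
  have hle := (padicValNat_dvd_iff_le hmne).mp hfin
  omega

/-- The `r`-adic valuation of `Φ_m(p)` is at most 1, when `m = e * r ^ k`. -/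
lemma val_le_one (p m : ℕ) (hp : 2 ≤ p) (hm : 2 < m) {r e k : ℕ} (hr : r.Prime)
    (he1 : 1 ≤ e) (herm : e ∣ r - 1) (hrpe : r ∣ p ^ e - 1) (hrp : ¬ r ∣ p) (hk : 1 ≤ k)
    (hmek : m = e * r ^ k) :
    padicValNat r (((cyclotomic m ℤ).eval (p : ℤ)).toNat) ≤ 1 := by
  haveI : Fact r.Prime := ⟨hr⟩
  set D := e * r ^ (k - 1) with hD_def
  have hr2 := hr.two_le
  have hDdvd : D ∣ m := by
    rw [hmek]
    exact mul_dvd_mul_left e (pow_dvd_pow r (by omega))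
  have hDlt : D < m := by
    rw [hmek, hD_def]
    have : r ^ (k - 1) < r ^ k := Nat.pow_lt_pow_right (by omega) (by omega)
    exact mul_lt_mul_of_pos_left this (by omega)
  have hD1 : 0 < D := Nat.mul_pos (by omega) (pow_pos hr.pos _)
  -- valuation difference is exactly 1
  have hval : padicValNat r (p ^ m - 1) = padicValNat r (p ^ D - 1) + 1 := by
    rcases hr.eq_two_or_odd' with rfl | hodd
    · -- r = 2 : then e = 1, m = 2 ^ k with k ≥ 2
      have hpodd : ¬ 2 ∣ p := hrp
      have he' : e = 1 := Nat.eq_one_of_dvd_one (by simpa using herm)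
      subst he'
      rw [one_mul] at hmek hD_def
      have hk2 : 2 ≤ k := by
        by_contra h2
        have : k = 1 := by omega
        rw [this] at hmek
        omega
      have hmeven : 2 ∣ m := by rw [hmek]; exact dvd_pow_self 2 (by omega)
      have hDeven : 2 ∣ D := by rw [hD_def]; exact dvd_pow_self 2 (by omega)
      have hp3 : 1 < p := by omega
      have h2p1 : (2:ℕ) ∣ p - 1 := by omega
      have h1 := padicValNat.pow_two_sub_pow (x := p) (y := 1) hp3 (by simpa using h2p1)
        hpodd (show m ≠ 0 by omega) (even_iff_two_dvd.mpr hmeven)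
      have h2 := padicValNat.pow_two_sub_pow (x := p) (y := 1) hp3 (by simpa using h2p1)
        hpodd (show D ≠ 0 by omega) (even_iff_two_dvd.mpr hDeven)
      simp only [one_pow] at h1 h2
      have hvm : padicValNat 2 m = k := by rw [hmek, padicValNat.prime_pow]
      have hvD : padicValNat 2 D = k - 1 := by rw [hD_def, padicValNat.prime_pow]
      omega
    · have hyx : 1 < p ^ e := Nat.one_lt_pow (by omega) hp
      have hx : ¬ r ∣ p ^ e := fun h => hrp (hr.dvd_of_dvd_pow h)
      have h1 := padicValNat.pow_sub_pow (p := r) hodd (x := p ^ e) (y := 1) hyx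
        (by simpa using hrpe) hx (n := r ^ k) (pow_pos hr.pos k).ne'
      have h2 := padicValNat.pow_sub_pow (p := r) hodd (x := p ^ e) (y := 1) hyx
        (by simpa using hrpe) hx (n := r ^ (k - 1)) (pow_pos hr.pos _).ne'
      simp only [one_pow, ← pow_mul] at h1 h2
      rw [show e * r ^ k = m from hmek.symm] at h1
      rw [show e * r ^ (k - 1) = D from hD_def.symm] at h2
      rw [h1, h2, padicValNat.prime_pow, padicValNat.prime_pow]
      omega
  -- conclude
  have hprod := aux_dvd_nat hp hDdvd hDlt hD1
  have hmne : p ^ m - 1 ≠ 0 := by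
    have h2 : p ≤ p ^ m := Nat.le_self_pow (by omega) p
    omega
  have hPhine : ((cyclotomic m ℤ).eval (p : ℤ)).toNat ≠ 0 := by
    have := cyclotomic_pos' m (show (1:ℤ) < (p:ℕ) by exact_mod_cast hp)
    omega
  have hDne : p ^ D - 1 ≠ 0 := by
    have h2 : 1 < p ^ D := Nat.one_lt_pow (by omega) hp
    omega
  have hmul : padicValNat r ((p ^ D - 1) * ((cyclotomic m ℤ).eval (p : ℤ)).toNat)
      = padicValNat r (p ^ D - 1) + padicValNat r (((cyclotomic m ℤ).eval (p : ℤ)).toNat) :=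
    padicValNat.mul hDne hPhine
  have hfin : r ^ padicValNat r ((p ^ D - 1) * ((cyclotomic m ℤ).eval (p : ℤ)).toNat) ∣ p ^ m - 1 :=
    pow_padicValNat_dvd.trans hprod
  have hle := (padicValNat_dvd_iff_le hmne).mp hfin
  omega


lemma eval_chain {e q : ℕ} (hq : q.Prime) (he : 1 ≤ e) (j : ℕ) (x : ℤ) :
    (cyclotomic (e * q ^ (j + 1)) ℤ).eval x = (cyclotomic (e * q) ℤ).eval (x ^ q ^ j) := by
  induction j generalizing x with
  | zero => simp
  | succ n ih =>
    have hdvd : q ∣ e * q ^ (n + 1) := Dvd.dvd.mul_left (dvd_pow_self q (by omega)) e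
    have hexp := cyclotomic_expand_eq_cyclotomic hq hdvd ℤ
    have : e * q ^ (n + 2) = (e * q ^ (n + 1)) * q := by ring
    rw [this, ← hexp, expand_eval, ih (x ^ q)]
    congr 1
    rw [← pow_mul, ← pow_succ']
lemma int_eval_eq_real (n : ℕ) (Y : ℤ) :
    (((cyclotomic n ℤ).eval Y : ℤ) : ℝ) = (cyclotomic n ℝ).eval ((Y : ℝ)) := by
  have h := eval_intCast_map (Int.castRingHom ℝ) (cyclotomic n ℤ) Y
  rw [map_cyclotomic_int] at h
  exact_mod_cast h.symm

lemma mul_eval {e q : ℕ} (hq : q.Prime) (hqe : ¬ q ∣ e) (Y : ℤ) :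
    (cyclotomic (e * q) ℤ).eval Y * (cyclotomic e ℤ).eval Y = (cyclotomic e ℤ).eval (Y ^ q) := by
  have h := cyclotomic_expand_eq_cyclotomic_mul hq hqe ℤ
  apply_fun Polynomial.eval Y at h
  rw [expand_eval, eval_mul] at h
  rw [← h]

end Zsig11

open Polynomial Zsig11 in
theorem stmt_11 (p m : ℕ) (hp : p.Prime) (hm : 2 < m) (hpm : ¬(p = 2 ∧ m = 6)) :
    ∃ p' : ℕ, p'.Prime ∧ p' ∣ p ^ m - 1 ∧
      ∀ t : ℕ, 1 ≤ t → t < m → ¬ p' ∣ p ^ t - 1 := by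
  by_contra hcon
  push_neg at hcon
  have hp2 : 2 ≤ p := hp.two_le
  have hm0 : 0 < m := by omega
  set Φ := ((cyclotomic m ℤ).eval (p : ℤ)).toNat with hPhi_def
  have hPhiposZ : 0 < (cyclotomic m ℤ).eval (p : ℤ) :=
    cyclotomic_pos' m (by exact_mod_cast hp2)
  have hPhi1 : 1 < Φ := by
    have h := sub_one_lt_natAbs_cyclotomic_eval (show 1 < m by omega) (show p ≠ 1 by omega)
    have h1 := Int.toNat_of_nonneg hPhiposZ.le
    have h2 := Int.natAbs_of_nonneg hPhiposZ.le
    omega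
  set q := Φ.minFac with hq_def
  have hqprime : q.Prime := Nat.minFac_prime (by omega)
  have hqPhi : q ∣ Φ := Nat.minFac_dvd Φ
  have hPhidvd : Φ ∣ p ^ m - 1 := phi_dvd_nat hp2 hm0
  have hstruct : ∀ r : ℕ, r.Prime → r ∣ Φ →
      ∃ e k, orderOf ((p : ℕ) : ZMod r) = e ∧ e ∣ r - 1 ∧ ¬ r ∣ e ∧ r ∣ m ∧
        1 ≤ e ∧ r ∣ p ^ e - 1 ∧ 1 ≤ k ∧ m = e * r ^ k := by
    intro r hr hrPhi
    obtain ⟨t, ht1, htm, hrt⟩ := hcon r hr (hrPhi.trans hPhidvd)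
    exact structure_lemma p m hp2 hm hr hrPhi ht1 htm hrt
  obtain ⟨e, k, he_ord, herm, hre, hqm, he1, hqpe, hk1, hmek⟩ := hstruct q hqprime hqPhi
  have hqp : ¬ q ∣ p := by
    intro h
    have h1 : q ∣ p ^ e := dvd_pow h (by omega)
    have h2 : q ∣ p ^ e - (p ^ e - 1) := Nat.dvd_sub h1 hqpe
    have h3 : 1 ≤ p ^ e := Nat.one_le_pow _ _ (by omega)
    rw [show p ^ e - (p ^ e - 1) = 1 by omega] at h2
    have := hqprime.two_le
    have := Nat.eq_one_of_dvd_one h2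
    omega
  -- uniqueness of the prime divisor of Φ
  have huniq : ∀ {d : ℕ}, d.Prime → d ∣ Φ → d = q := by
    intro d hd hdPhi
    by_contra hne
    obtain ⟨e', k', _, herm', hre', hdm, he1', hdpe', hk1', hmek'⟩ := hstruct d hd hdPhi
    have key : ∀ a b ea ka eb : ℕ, a.Prime → b.Prime → a ≠ b → b ∣ m → m = ea * a ^ ka →
        ea ∣ a - 1 → 1 ≤ ea → b ≤ a - 1 := by
      intro a b ea ka eb ha hb hab hbm hmea hea hea1
      have hbd : b ∣ ea * a ^ ka := hmea ▸ hbm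
      have hbe : b ∣ ea := by
        rcases hb.dvd_mul.mp hbd with h | h
        · exact h
        · exact absurd ((Nat.prime_dvd_prime_iff_eq hb ha).mp
            (hb.dvd_of_dvd_pow h)) hab.symm
      have h1 : b ∣ a - 1 := hbe.trans hea
      have h2 : 1 ≤ a - 1 := le_trans hea1 (Nat.le_of_dvd (by
        have := ha.two_le
        rcases Nat.eq_zero_or_pos (a - 1) with h0 | h0
        · rw [h0] at hea
          have := Nat.eq_zero_of_dvd_of_lt hea
          omega
        · exact h0) hea)
      exact Nat.le_of_dvd (by omega) h1
    have h1 : q ≤ d - 1 := key d q e' k' e hd hqprime hne hqm hmek' herm' he1'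
    have h2 : d ≤ q - 1 := key q d e k e' hqprime hd (Ne.symm hne) hdm hmek herm he1
    have := hd.two_le
    have := hqprime.two_le
    omega
  -- Φ is a power of q, with valuation at most 1, hence Φ = q
  haveI : Fact q.Prime := ⟨hqprime⟩
  have hPow : Φ = q ^ Φ.primeFactorsList.length :=
    Nat.eq_prime_pow_of_unique_prime_dvd (by omega) huniq
  have hval : padicValNat q Φ ≤ 1 := val_le_one p m hp2 hm hqprime he1 herm hqpe hqp hk1 hmek
  have hPhiq : Φ = q := by
    have hv : padicValNat q Φ = Φ.primeFactorsList.length := by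
      conv_lhs => rw [hPow]
      rw [padicValNat.prime_pow]
    have hlen0 : Φ.primeFactorsList.length ≠ 0 := by
      intro h0
      rw [h0, pow_zero] at hPow
      omega
    have hlen1 : Φ.primeFactorsList.length = 1 := by omega
    rw [hPow, hlen1, pow_one]
  have hPhiqZ : (cyclotomic m ℤ).eval (p : ℤ) = (q : ℤ) := by
    have h1 := Int.toNat_of_nonneg hPhiposZ.le
    rw [← hPhi_def, hPhiq] at h1
    exact h1.symm
  -- endgame
  rcases hqprime.eq_two_or_odd' with hq2 | hqodd
  · -- q = 2 : then e = 1, m = 2 ^ k, and Φ = p^(2^(k-1)) + 1 > 2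
    have he' : e = 1 := Nat.eq_one_of_dvd_one (by rw [hq2] at herm; simpa using herm)
    have hchain := eval_chain (e := 1) Nat.prime_two (le_refl 1) (k - 1) ((p : ℕ) : ℤ)
    rw [show k - 1 + 1 = k by omega] at hchain
    have hm2 : (1 : ℕ) * 2 ^ k = m := by rw [hmek, he', hq2]
    rw [hm2, show (1:ℕ) * 2 = 2 by norm_num] at hchain
    rw [hPhiqZ, hq2] at hchain
    rw [cyclotomic_two, eval_add, eval_X, eval_one] at hchain
    have hple : (2 : ℤ) ≤ ((p : ℕ) : ℤ) ^ 2 ^ (k - 1) := by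
      have h2 : (2 : ℕ) ≤ p ^ 2 ^ (k - 1) :=
        le_trans hp2 (Nat.le_self_pow (pow_pos two_pos _).ne' p)
      exact_mod_cast h2
    omega
  · -- q odd
    set Y := p ^ (q ^ (k - 1)) with hY_def
    have hY2 : 2 ≤ Y := by
      have : 1 < p ^ (q ^ (k - 1)) := Nat.one_lt_pow (pow_pos hqprime.pos _).ne' hp2
      omega
    have hq3 : 3 ≤ q := by
      obtain ⟨c, hc⟩ := hqodd
      have := hqprime.two_le
      omega
    have hchain := eval_chain hqprime he1 (k - 1) ((p : ℕ) : ℤ)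
    rw [show k - 1 + 1 = k by omega] at hchain
    rw [← hmek] at hchain
    have hYZ : ((Y : ℕ) : ℤ) = ((p : ℕ) : ℤ) ^ q ^ (k - 1) := by
      rw [hY_def]; push_cast; ring
    rw [← hYZ] at hchain
    have hmulZ := mul_eval hqprime hre ((Y : ℕ) : ℤ)
    rw [← hchain, hPhiqZ] at hmulZ
    -- cast to ℝ
    have hmulR : (q : ℝ) * (cyclotomic e ℝ).eval ((Y : ℕ) : ℝ) =
        (cyclotomic e ℝ).eval (((Y : ℕ) : ℝ) ^ q) := by
      have := congrArg (fun z : ℤ => (z : ℝ)) hmulZ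
      push_cast at this
      rw [int_eval_eq_real, int_eval_eq_real] at this
      push_cast at this
      convert this using 2 <;> push_cast <;> ring
    have hYR : (1 : ℝ) < ((Y : ℕ) : ℝ) := by exact_mod_cast hY2
    have hYqR : (1 : ℝ) < ((Y : ℕ) : ℝ) ^ q := one_lt_pow₀ hYR (by omega)
    set s := e.totient with hs_def
    have hs1 : 1 ≤ s := Nat.totient_pos.mpr (by omega)
    have hupper : (cyclotomic e ℝ).eval ((Y : ℕ) : ℝ) ≤ (((Y : ℕ) : ℝ) + 1) ^ s :=
      cyclotomic_eval_le_add_one_pow_totient hYR e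
    have hlower : ((((Y : ℕ) : ℝ)) ^ q - 1) ^ s ≤ (cyclotomic e ℝ).eval (((Y : ℕ) : ℝ) ^ q) :=
      sub_one_pow_totient_le_cyclotomic_eval hYqR e
    have hexc : ¬ (Y = 2 ∧ q = 3) := by
      rintro ⟨hY2', hq3'⟩
      have hj1 : 1 ≤ q ^ (k - 1) := Nat.one_le_pow _ _ hqprime.pos
      have hple : p ≤ Y := by rw [hY_def]; exact Nat.le_self_pow (by omega) p
      have hp2' : p = 2 := by omega
      have hj : q ^ (k - 1) = 1 := by
        by_contra hj
        have h2 : 2 ≤ q ^ (k - 1) := by omega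
        have : 2 ^ 2 ≤ p ^ (q ^ (k - 1)) := by
          calc (2:ℕ) ^ 2 ≤ p ^ 2 := Nat.pow_le_pow_left hp2 2
          _ ≤ p ^ (q ^ (k - 1)) := Nat.pow_le_pow_right (by omega) h2
        rw [← hY_def, hY2'] at this
        omega
      have hk' : k = 1 := by
        by_contra hk'
        have : 2 ≤ k := by omega
        have : q ≤ q ^ (k - 1) := Nat.le_self_pow (by omega) q
        omega
      -- m = e * q = 3 e, e ∣ 2
      rw [hq3'] at herm
      rcases (Nat.dvd_prime Nat.prime_two).mp herm with he2 | he2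
      · rw [he2, hp2'] at hqpe
        have := hqprime.two_le
        simp at hqpe
        omega
      · apply hpm
        constructor
        · exact hp2'
        · rw [hmek, he2, hq3', hk']; ring
    have hineq := aux_ineq hY2 hq3 hs1 hexc
    -- cast the nat inequality to ℝ and derive contradiction
    have hYq1 : 1 ≤ Y ^ q := Nat.one_le_pow _ _ (by omega)
    have hcast : ((Y ^ q - 1 : ℕ) : ℝ) = ((Y : ℕ) : ℝ) ^ q - 1 := by
      push_cast [Nat.cast_sub hYq1]
      ring
    have hineqR : (q : ℝ) * (((Y : ℕ) : ℝ) + 1) ^ s < (((Y : ℕ) : ℝ) ^ q - 1) ^ s := by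
      have := (Nat.cast_lt (α := ℝ)).mpr hineq
      push_cast [hcast] at this
      convert this using 2 <;> push_cast <;> ring
    have hchainR : (((Y : ℕ) : ℝ) ^ q - 1) ^ s ≤ (q : ℝ) * (((Y : ℕ) : ℝ) + 1) ^ s := by
      calc (((Y : ℕ) : ℝ) ^ q - 1) ^ s ≤ (cyclotomic e ℝ).eval (((Y : ℕ) : ℝ) ^ q) := hlower
        _ = (q : ℝ) * (cyclotomic e ℝ).eval ((Y : ℕ) : ℝ) := hmulR.symm
        _ ≤ (q : ℝ) * (((Y : ℕ) : ℝ) + 1) ^ s := by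
            apply mul_le_mul_of_nonneg_left hupper (by positivity)
    linarith
end

section
/- Let L = F_{p^m}, σ(x) = x^(p^k), τ(x) = x^(p^l), k ≠ 0, with gcd(m,l)/gcd(m,k,l) even. Set e = gcd(m,k,l). Then gcd(p^k + 1, p^l − 1, p^m − 1) = p^e + 1, and hence there exists α ∈ L* that is not a (p^e + 1)-st power if and only if p^e + 1 > 1 (which always holds); moreover α ∈ L* is in L^{σ+1}·L^{τ−1} if and only if α is a (p^e + 1)-st power in L*. -/
lemma pow_sub_one_dvd' (p a b : ℕ) (h : a ∣ b) : p ^ a - 1 ∣ p ^ b - 1 := by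
  obtain ⟨c, rfl⟩ := h
  exact Nat.pow_sub_one_dvd_pow_sub_one p (Dvd.intro c rfl)

lemma gcd_pow_sub_one (p : ℕ) (hp : 1 ≤ p) : ∀ a b : ℕ,
    Nat.gcd (p ^ a - 1) (p ^ b - 1) = p ^ Nat.gcd a b - 1 := by
  intro a b
  induction a, b using Nat.gcd.induction with
  | H0 b => simp
  | H1 a b ha ih =>
    rw [Nat.gcd_rec a b, ← ih, Nat.gcd_comm (p ^ (b % a) - 1)]
    obtain ⟨c, hc⟩ := pow_sub_one_dvd' p a (a * (b / a)) ⟨b / a, rfl⟩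
    have h1 : 1 ≤ p ^ (a * (b / a)) := Nat.one_le_pow _ _ hp
    have h1' : 1 ≤ p ^ (b % a) := Nat.one_le_pow _ _ hp
    have hA : p ^ (a * (b / a)) = (p ^ a - 1) * c + 1 := by omega
    have hAB : p ^ b = p ^ (a * (b / a)) * p ^ (b % a) := by
      rw [← pow_add, Nat.div_add_mod]
    have h2 : p ^ b = (p ^ a - 1) * (c * p ^ (b % a)) + p ^ (b % a) := by
      rw [hAB, hA]; ring
    have h3 : p ^ b - 1 = (p ^ (b % a) - 1) + (p ^ a - 1) * (c * p ^ (b % a)) := by omega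
    rw [h3, Nat.gcd_add_mul_left_right]


lemma cofactor_odd (x t : ℕ) (hx : Odd x) (ht : Odd t) :
    ∃ c : ℕ, x ^ t + 1 = (x + 1) * c ∧ Odd c := by
  set S : ℤ := ∑ i ∈ Finset.range t, (x : ℤ) ^ i * (-1) ^ (t - 1 - i) with hS
  have hgeom := geom_sum₂_mul (x : ℤ) (-1) t
  rw [ht.neg_one_pow] at hgeom
  have hid : S * ((x : ℤ) + 1) = (x : ℤ) ^ t + 1 := by
    simpa [sub_neg_eq_add] using hgeom
  have hodd : Odd S := by
    have h2 : ((S : ZMod 2)) = 1 := by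
      rw [hS]
      push_cast
      have hx2 : ((x : ZMod 2)) = 1 := by
        have := Nat.odd_iff.mp hx
        rw [← ZMod.natCast_mod, this]; simp
      simp [hx2, CharTwo.neg_eq]
      have := Nat.odd_iff.mp ht
      rw [← ZMod.natCast_mod, this]; simp
    rcases Int.even_or_odd S with he | ho
    · exfalso
      obtain ⟨r, hr⟩ := he
      rw [hr] at h2; push_cast at h2
      rw [← two_mul] at h2
      have h20 : (2 : ZMod 2) = 0 := by decide
      rw [h20, zero_mul] at h2
      exact zero_ne_one h2
    · exact ho
  have hSpos : 0 < S := by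
    nlinarith [hid, pow_pos (show (0:ℤ) < x by exact_mod_cast hx.pos) t]
  refine ⟨S.toNat, ?_, ?_⟩
  · have : ((x:ℤ) + 1) * S.toNat = (x:ℤ)^t + 1 := by
      rw [Int.toNat_of_nonneg hSpos.le]; linarith [hid]
    exact_mod_cast this.symm
  · rcases hodd with ⟨c, hc⟩
    refine ⟨c.toNat, ?_⟩
    omega



lemma sq_sub_one_fac (X : ℕ) (hX : 1 ≤ X) : (X - 1) * (X + 1) = X ^ 2 - 1 := by
  have h2 : 1 ≤ X ^ 2 := Nat.one_le_pow _ _ hX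
  zify [hX, h2]; ring

lemma dvd_gcd_mul (n a b : ℕ) (h : n ∣ a * b) : n ∣ Nat.gcd n a * b := by
  rw [← Nat.gcd_mul_right]
  exact Nat.dvd_gcd (Dvd.intro b rfl) h



lemma gcd_pow_add_one (p k g : ℕ) (hp : p.Prime) (hk : 0 < k) (hg : 0 < g)
    (hev : Even (g / Nat.gcd k g)) :
    Nat.gcd (p ^ k + 1) (p ^ g - 1) = p ^ Nat.gcd k g + 1 := by
  have hp1 : 1 ≤ p := hp.one_le
  have hp2 : 2 ≤ p := hp.two_le
  set d := Nat.gcd k g with hd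
  have hdpos : 0 < d := Nat.gcd_pos_of_pos_left _ hk
  have hdk : d ∣ k := Nat.gcd_dvd_left _ _
  have hdg : d ∣ g := Nat.gcd_dvd_right _ _
  set t := k / d with ht
  set s := g / d with hs
  have hkt : k = d * t := (Nat.mul_div_cancel' hdk).symm
  have hgs : g = d * s := (Nat.mul_div_cancel' hdg).symm
  have hcop : Nat.Coprime t s := Nat.coprime_div_gcd_div_gcd hdpos
  have hseven : 2 ∣ s := hev.two_dvd
  have hcop1 : Nat.gcd t s = 1 := hcop
  have htodd : Odd t := by
    rcases Nat.even_or_odd t with he | ho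
    · exfalso
      have : 2 ∣ Nat.gcd t s := Nat.dvd_gcd he.two_dvd hseven
      omega
    · exact ho
  set B := p ^ d + 1 with hB
  -- lower bound : B ∣ both
  have hBk : B ∣ p ^ k + 1 := by
    have := Odd.nat_add_dvd_pow_add_pow (p ^ d) 1 htodd
    rwa [one_pow, ← pow_mul, ← hkt] at this
  have h2dg : 2 * d ∣ g := by
    obtain ⟨s', hs'⟩ := hseven
    exact ⟨s', by rw [hgs, hs']; ring⟩
  have hBg : B ∣ p ^ g - 1 := by
    have h1 : B ∣ p ^ (2 * d) - 1 := by
      rw [mul_comm 2 d, pow_mul, ← sq_sub_one_fac (p ^ d) (Nat.one_le_pow _ _ hp1)]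
      exact Dvd.intro_left _ rfl
    exact h1.trans (pow_sub_one_dvd' p _ _ h2dg)
  set G := Nat.gcd (p ^ k + 1) (p ^ g - 1) with hG
  have hBG : B ∣ G := Nat.dvd_gcd hBk hBg
  have hGk : G ∣ p ^ k + 1 := Nat.gcd_dvd_left _ _
  have hGg : G ∣ p ^ g - 1 := Nat.gcd_dvd_right _ _
  -- upper bound
  have hG2k : G ∣ p ^ (2 * k) - 1 := by
    have : G ∣ (p ^ k - 1) * (p ^ k + 1) := Dvd.dvd.mul_left hGk _
    rwa [sq_sub_one_fac (p ^ k) (Nat.one_le_pow _ _ hp1), ← pow_mul, mul_comm k 2] at this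
  have hgcd2k : Nat.gcd (2 * k) g = 2 * d := by
    have h1 : Nat.gcd (2 * k) g = d * Nat.gcd (2 * t) s := by
      rw [hkt, hgs, ← mul_assoc, mul_comm 2 d, mul_assoc, Nat.gcd_mul_left]
    have h2 : Nat.gcd (2 * t) s = 2 := by
      apply Nat.dvd_antisymm
      · have hcop' : Nat.Coprime (Nat.gcd (2 * t) s) t :=
          Nat.Coprime.coprime_dvd_left (Nat.gcd_dvd_right _ _) hcop.symm
        exact (Nat.Coprime.dvd_of_dvd_mul_right hcop' (Nat.gcd_dvd_left _ _))
      · exact Nat.dvd_gcd ⟨t, rfl⟩ hseven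
    rw [h1, h2, mul_comm]
  have hG2d : G ∣ p ^ (2 * d) - 1 := by
    have := Nat.dvd_gcd hG2k hGg
    rwa [gcd_pow_sub_one p hp1, hgcd2k] at this
  have hGfac : G ∣ (p ^ d - 1) * B := by
    rwa [sq_sub_one_fac (p ^ d) (Nat.one_le_pow _ _ hp1), ← pow_mul, mul_comm d 2]
  have hgcd_small : Nat.gcd G (p ^ d - 1) ∣ 2 := by
    have hc1 : Nat.gcd G (p ^ d - 1) ∣ p ^ k + 1 := (Nat.gcd_dvd_left _ _).trans hGk
    have hc2 : Nat.gcd G (p ^ d - 1) ∣ p ^ k - 1 :=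
      (Nat.gcd_dvd_right _ _).trans (pow_sub_one_dvd' p _ _ hdk)
    have h1k : 1 ≤ p ^ k := Nat.one_le_pow _ _ hp1
    have := Nat.dvd_sub hc1 hc2
    rwa [show p ^ k + 1 - (p ^ k - 1) = 2 by omega] at this
  have hG2B : G ∣ 2 * B := by
    have := dvd_gcd_mul G (p ^ d - 1) B hGfac
    exact this.trans (Nat.mul_dvd_mul_right hgcd_small B)
  -- finish by parity cases
  rcases hp.eq_two_or_odd' with rfl | hpodd
  · -- p = 2 : G odd
    have hGodd : ¬ 2 ∣ G := by
      intro h2G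
      have : 2 ∣ 2 ^ k + 1 := h2G.trans hGk
      have : 2 ∣ 2 ^ k := dvd_pow_self 2 hk.ne'
      omega
    have : Nat.Coprime G 2 := by
      have h1 := Nat.gcd_dvd_left G 2
      have h2 : Nat.gcd G 2 ≤ 2 := Nat.le_of_dvd (by norm_num) (Nat.gcd_dvd_right G 2)
      have h3 : 0 < Nat.gcd G 2 := Nat.gcd_pos_of_pos_right G (by norm_num)
      have h4 : Nat.gcd G 2 ≠ 2 := fun h => hGodd (h ▸ h1)
      unfold Nat.Coprime
      omega
    exact Nat.dvd_antisymm (this.dvd_of_dvd_mul_left hG2B) hBG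
  · -- p odd
    obtain ⟨c, hc, hcodd⟩ := cofactor_odd (p ^ d) t (hpodd.pow) htodd
    have hkc : p ^ k + 1 = B * c := by rw [hkt, pow_mul]; exact hc
    apply Nat.dvd_antisymm _ hBG
    obtain ⟨u, hu⟩ := hBG
    have hBpos : 0 < B := by positivity
    have hu2 : u ∣ 2 := by
      have h' : B * u ∣ B * 2 := by rw [← hu]; rwa [mul_comm 2 B] at hG2B
      exact (mul_dvd_mul_iff_left hBpos.ne').mp h'
    have hGpos : 0 < G := Nat.gcd_pos_of_pos_left _ (by positivity)
    have hupos : 0 < u := by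
      rcases Nat.eq_zero_or_pos u with h0 | h0
      · rw [h0, mul_zero] at hu; omega
      · exact h0
    have hule : u ≤ 2 := Nat.le_of_dvd (by norm_num) hu2
    interval_cases u
    · rw [hu, mul_one]
    · exfalso
      have hGBc : G ∣ B * c := hkc ▸ hGk
      have : B * 2 ∣ B * c := hu ▸ hGBc
      have h2c : 2 ∣ c := (mul_dvd_mul_iff_left hBpos.ne').mp this
      rw [Nat.odd_iff] at hcodd
      omega


lemma cyclic_pow_of_pow_div_eq_one {G : Type*} [Group G] [Fintype G] [IsCyclic G]
    (D : ℕ) (hD : D ∣ Fintype.card G) (hD0 : 0 < D) (x : G)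
    (hx : x ^ (Fintype.card G / D) = 1) : ∃ w : G, x = w ^ D := by
  obtain ⟨ζ, hζ⟩ := IsCyclic.exists_generator (α := G)
  have hord : orderOf ζ = Fintype.card G := by
    rw [orderOf_eq_card_of_forall_mem_zpowers hζ, Nat.card_eq_fintype_card]
  obtain ⟨j, hj⟩ := (mem_powers_iff_mem_zpowers.mpr (hζ x))
  have hj : ζ ^ j = x := hj
  set N := Fintype.card G
  have hq : D * (N / D) = N := Nat.mul_div_cancel' hD
  have hNpos : 0 < N := Fintype.card_pos
  have hqpos : 0 < N / D := Nat.div_pos (Nat.le_of_dvd hNpos hD) hD0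
  have h1 : ζ ^ (j * (N / D)) = 1 := by rw [pow_mul, hj, hx]
  have h2 : N ∣ j * (N / D) := by
    have := orderOf_dvd_of_pow_eq_one h1; rwa [hord] at this
  have h3 : D ∣ j := by
    rcases h2 with ⟨c, hc⟩
    have : D * (N / D) * c = j * (N / D) := by rw [hq, ← hc]
    have : j = D * c := by
      have := Nat.eq_of_mul_eq_mul_right hqpos (by linarith [this] : j * (N/D) = (D * c) * (N/D))
      omega
    exact ⟨c, this⟩
  obtain ⟨c, rfl⟩ := h3
  exact ⟨ζ ^ c, by rw [← hj, ← pow_mul, mul_comm]⟩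

lemma generator_not_pow {G : Type*} [Group G] [Fintype G] [IsCyclic G]
    (D : ℕ) (hD : D ∣ Fintype.card G) (hD1 : 1 < D) :
    ∃ α : G, ¬ ∃ w : G, α = w ^ D := by
  obtain ⟨ζ, hζ⟩ := IsCyclic.exists_generator (α := G)
  have hord : orderOf ζ = Fintype.card G := by
    rw [orderOf_eq_card_of_forall_mem_zpowers hζ, Nat.card_eq_fintype_card]
  set N := Fintype.card G
  have hNpos : 0 < N := Fintype.card_pos
  refine ⟨ζ, fun ⟨w, hw⟩ => ?_⟩
  have h1 : ζ ^ (N / D) = 1 := by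
    rw [hw, ← pow_mul, Nat.mul_div_cancel' hD, pow_card_eq_one]
  have h2 : N ∣ N / D := by
    have := orderOf_dvd_of_pow_eq_one h1; rwa [hord] at this
  have h3 : N / D < N := Nat.div_lt_self hNpos hD1
  have h4 : 0 < N / D := Nat.div_pos (Nat.le_of_dvd hNpos hD) (by omega)
  exact absurd (Nat.le_of_dvd h4 h2) (by omega)

lemma bezout_pow {G : Type*} [CommGroup G] (a b N D : ℕ) (hD : D = Nat.gcd a (Nat.gcd b N))
    (w : G) (hw : w ^ N = 1) : ∃ x y : G, w ^ D = x ^ a * y ^ b := by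
  have hbez1 : (D : ℤ) = a * Nat.gcdA a (Nat.gcd b N) + (Nat.gcd b N) * Nat.gcdB a (Nat.gcd b N) := by
    rw [hD]; exact_mod_cast Nat.gcd_eq_gcd_ab a (Nat.gcd b N)
  have hbez2 : ((Nat.gcd b N : ℕ) : ℤ) = b * Nat.gcdA b N + N * Nat.gcdB b N :=
    mod_cast Nat.gcd_eq_gcd_ab b N
  set u := Nat.gcdA a (Nat.gcd b N)
  set v := Nat.gcdB a (Nat.gcd b N)
  set u2 := Nat.gcdA b N
  set v2 := Nat.gcdB b N
  have hDint : (D : ℤ) = a * u + b * (u2 * v) + N * (v2 * v) := by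
    linear_combination hbez1 + v * hbez2
  refine ⟨w ^ u, w ^ (u2 * v), ?_⟩
  have hwN : w ^ (N : ℤ) = 1 := by rw [zpow_natCast, hw]
  have : w ^ (D : ℤ) = (w ^ u) ^ (a : ℤ) * (w ^ (u2 * v)) ^ (b : ℤ) * (w ^ (v2 * v)) ^ (N : ℤ) := by
    rw [← zpow_mul, ← zpow_mul, ← zpow_mul, ← zpow_add, ← zpow_add, hDint]
    ring_nf
  rw [← zpow_natCast w D, this, ← zpow_mul w (v2 * v) (N : ℤ), mul_comm (v2 * v) (N : ℤ),
    zpow_mul w (N : ℤ) (v2 * v), hwN, one_zpow, mul_one, zpow_natCast, zpow_natCast]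


theorem stmt_17 (p m k l : ℕ) (hp : p.Prime) (hk : 0 < k) (hkm : k < m)
    (hl : 0 < l) (hlm : l < m)
    (heven : Even (Nat.gcd m l / Nat.gcd m (Nat.gcd k l)))
    {L : Type*} [Field L] [Fintype L] (hL : Fintype.card L = p ^ m) :
    Nat.gcd (p ^ k + 1) (Nat.gcd (p ^ l - 1) (p ^ m - 1))
        = p ^ Nat.gcd m (Nat.gcd k l) + 1 ∧
    (∃ α : L, α ≠ 0 ∧ ¬ ∃ w : L, w ≠ 0 ∧ α = w ^ (p ^ Nat.gcd m (Nat.gcd k l) + 1)) ∧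
    (∀ α : L, α ≠ 0 →
      ((∃ x y : L, x ≠ 0 ∧ y ≠ 0 ∧ α = x ^ (p ^ k + 1) * y ^ (p ^ l - 1)) ↔
        ∃ w : L, w ≠ 0 ∧ α = w ^ (p ^ Nat.gcd m (Nat.gcd k l) + 1))) := by
  have hp1 : 1 ≤ p := hp.one_le
  set e := Nat.gcd m (Nat.gcd k l) with hedef
  have he : Nat.gcd k (Nat.gcd l m) = e := by
    rw [hedef, Nat.gcd_comm l m, ← Nat.gcd_assoc, Nat.gcd_comm k m, Nat.gcd_assoc]
  have hg : 0 < Nat.gcd l m := Nat.gcd_pos_of_pos_left _ hl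
  have hev' : Even (Nat.gcd l m / Nat.gcd k (Nat.gcd l m)) := by
    rw [he, Nat.gcd_comm l m]; exact heven
  have hgcd : Nat.gcd (p ^ k + 1) (Nat.gcd (p ^ l - 1) (p ^ m - 1)) = p ^ e + 1 := by
    rw [gcd_pow_sub_one p hp1 l m, gcd_pow_add_one p k (Nat.gcd l m) hp hk hg hev', he]
  set a := p ^ k + 1 with hadef
  set b := p ^ l - 1 with hbdef
  set D := p ^ e + 1 with hDdef
  haveI : Fintype Lˣ := Fintype.ofFinite Lˣ
  have hD1 : 1 < D := by
    have : 1 ≤ p ^ e := Nat.one_le_pow _ _ hp1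
    omega
  have hN : Fintype.card Lˣ = p ^ m - 1 := by rw [← Nat.card_eq_fintype_card, Nat.card_units, Nat.card_eq_fintype_card, hL]
  have hDa : D ∣ a := by rw [← hgcd]; exact Nat.gcd_dvd_left _ _
  have hDb : D ∣ b := by
    rw [← hgcd]; exact (Nat.gcd_dvd_right _ _).trans (Nat.gcd_dvd_left _ _)
  have hDm : D ∣ p ^ m - 1 := by
    rw [← hgcd]; exact (Nat.gcd_dvd_right _ _).trans (Nat.gcd_dvd_right _ _)
  have hDcard : D ∣ Fintype.card Lˣ := by rw [hN]; exact hDm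
  have hDeq : D = Nat.gcd a (Nat.gcd b (Fintype.card Lˣ)) := by rw [hN, hgcd]
  refine ⟨hgcd, ?_, ?_⟩
  · -- existence of a non D-th power
    obtain ⟨αu, hαu⟩ := generator_not_pow (G := Lˣ) D hDcard hD1
    refine ⟨(αu : L), Units.ne_zero αu, fun ⟨w, hw0, hw⟩ => ?_⟩
    exact hαu ⟨Units.mk0 w hw0, Units.ext (by
      rw [Units.val_pow_eq_pow_val, Units.val_mk0]; exact hw)⟩
  · intro α hα
    set αu := Units.mk0 α hα with hαudef
    constructor
    · rintro ⟨x, y, hx0, hy0, hxy⟩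
      set xu := Units.mk0 x hx0
      set yu := Units.mk0 y hy0
      have hαu : αu = xu ^ a * yu ^ b := Units.ext (by
        rw [Units.val_mul, Units.val_pow_eq_pow_val, Units.val_pow_eq_pow_val]
        exact hxy)
      set N := Fintype.card Lˣ with hNdef
      have hq : D * (N / D) = N := Nat.mul_div_cancel' hDcard
      obtain ⟨a', ha'⟩ := hDa
      obtain ⟨b', hb'⟩ := hDb
      have hpow : αu ^ (N / D) = 1 := by
        rw [hαu, mul_pow, ← pow_mul, ← pow_mul, ha', hb']
        rw [mul_assoc D a' (N / D), mul_comm a' (N / D), ← mul_assoc D (N / D) a', hq]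
        rw [mul_assoc D b' (N / D), mul_comm b' (N / D), ← mul_assoc D (N / D) b', hq]
        rw [pow_mul, pow_mul, pow_card_eq_one, pow_card_eq_one, one_pow, one_pow, one_mul]
      obtain ⟨wu, hwu⟩ := cyclic_pow_of_pow_div_eq_one D hDcard (by omega) αu hpow
      refine ⟨(wu : L), Units.ne_zero wu, ?_⟩
      have : (αu : L) = ((wu ^ D : Lˣ) : L) := by rw [← hwu]
      rwa [Units.val_mk0, Units.val_pow_eq_pow_val] at this
    · rintro ⟨w, hw0, hw⟩
      set wu := Units.mk0 w hw0
      obtain ⟨xu, yu, hxy⟩ := bezout_pow a b (Fintype.card Lˣ) D hDeq wu (pow_card_eq_one)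
      refine ⟨(xu : L), (yu : L), Units.ne_zero xu, Units.ne_zero yu, ?_⟩
      have : ((wu ^ D : Lˣ) : L) = ((xu ^ a * yu ^ b : Lˣ) : L) := by rw [hxy]
      rw [Units.val_pow_eq_pow_val, Units.val_mk0] at this
      rw [hw, this, Units.val_mul, Units.val_pow_eq_pow_val, Units.val_pow_eq_pow_val]
end

section
/- Let L = F_{p^m}, σ(x) = x^(p^k) with fixed field K, η ∈ L with N_{L:K}(η) ≠ 1, and let T_a (a ∈ L*) be invertible σ-semilinear transformations of L² with T_a + T_b = T_{a+b} and each T_a irreducible (no nontrivial invariant L-subspace). Define x ∘ y = y₀·x + η·T_{y₁}(x) + det(M_{T_{y₁}})^{σ^{-1}}·T_{y₁}^{-1}(x) for y = (y₀, y₁), with the T_{y₁}-terms interpreted as 0 when y₁ = 0. Then for every y ≠ 0, the map x ↦ x ∘ y is a bijection of L². -/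
/-- The σ-semilinear map on `L²` with matrix entries `c₁ a, c₂ a, c₃ a, c₄ a`. -/
def semilinMap {L : Type*} [Field L] (σ : L ≃+* L) (c₁ c₂ c₃ c₄ : L → L)
    (a : L) (x : L × L) : L × L :=
  (c₁ a * σ x.1 + c₂ a * σ x.2, c₃ a * σ x.1 + c₄ a * σ x.2)

open Polynomial Finset in
lemma auxFixedPow {L : Type*} [Field L] [Fintype L] (σ : L ≃+* L) :
    ∀ z : L, z ≠ 0 → σ (z ^ ((Fintype.card L - 1) / (Nat.card {x : L // σ x = x} - 1)))
      = z ^ ((Fintype.card L - 1) / (Nat.card {x : L // σ x = x} - 1)) := by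
  classical
  set c := Nat.card {x : L // σ x = x} with hc
  set F : Finset L := univ.filter (fun x => σ x = x) with hF
  have hcF : F.card = c := by
    rw [hc, Nat.card_eq_fintype_card, Fintype.card_subtype]
  have h0F : (0 : L) ∈ F := by simp [hF]
  have h1F : (1 : L) ∈ F := by simp [hF]
  have hc2 : 2 ≤ c := by
    rw [← hcF]
    exact Finset.one_lt_card_iff.2 ⟨0, 1, h0F, h1F, by norm_num⟩
  have hh : 0 < c - 1 := by omega
  set H : Subgroup Lˣ :=
    { carrier := {u : Lˣ | σ ↑u = ↑u}
      mul_mem' := fun {a b} ha hb => by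
        simp only [Set.mem_setOf_eq, Units.val_mul, map_mul] at *
        rw [ha, hb]
      one_mem' := by simp
      inv_mem' := fun {a} ha => by
        simp only [Set.mem_setOf_eq] at *
        simp [← Units.val_inv_eq_inv_val, Units.val_inv_eq_inv_val, map_inv₀, ha] } with hH
  have hmemH : ∀ u : Lˣ, u ∈ H ↔ σ ↑u = ↑u := fun u => Iff.rfl
  -- card of H
  have hFe : ∀ z : L, z ∈ F.erase 0 ↔ (σ z = z ∧ z ≠ 0) := by
    intro z; simp [hF, mem_erase, and_comm]
  have hcardH : Nat.card H = c - 1 := by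
    have e : H ≃ {z : L // z ∈ F.erase 0} :=
      { toFun := fun u => ⟨(u : Lˣ), (hFe _).2 ⟨u.2, Units.ne_zero _⟩⟩
        invFun := fun z => ⟨Units.mk0 z.1 ((hFe _).1 z.2).2, ((hFe _).1 z.2).1⟩
        left_inv := fun u => by ext; rfl
        right_inv := fun z => rfl }
    rw [Nat.card_congr e, Nat.card_eq_finsetCard, card_erase_of_mem h0F, hcF]
  have hdvd : c - 1 ∣ Fintype.card L - 1 := by
    have := Subgroup.card_subgroup_dvd_card H
    rwa [hcardH, Nat.card_eq_fintype_card, Fintype.card_units] at this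
  -- fixed nonzero elements have z ^ (c-1) = 1
  have claim1 : ∀ z : L, σ z = z → z ≠ 0 → z ^ (c - 1) = 1 := by
    intro z hfix hz
    have hu : (Units.mk0 z hz) ∈ H := hfix
    have : ((⟨Units.mk0 z hz, hu⟩ : H) : Lˣ) ^ (c - 1) = 1 := by
      rw [← hcardH, ← Subgroup.coe_pow, pow_card_eq_one', Subgroup.coe_one]
    have := congrArg (Units.val) this
    simpa using this
  -- conversely
  have claim2 : ∀ z : L, z ≠ 0 → z ^ (c - 1) = 1 → σ z = z := by
    intro z hz hpow
    set R : Finset L := (nthRoots (c - 1) (1 : L)).toFinset with hR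
    have hsub : F.erase 0 ⊆ R := by
      intro w hw
      obtain ⟨hfix, hwne⟩ := (hFe w).1 hw
      rw [hR, Multiset.mem_toFinset, mem_nthRoots hh]
      exact claim1 w hfix hwne
    have hcard : R.card ≤ c - 1 := by
      calc R.card ≤ Multiset.card (nthRoots (c - 1) (1 : L)) := Multiset.toFinset_card_le _
        _ ≤ c - 1 := card_nthRoots _ _
    have heq : F.erase 0 = R :=
      Finset.eq_of_subset_of_card_le hsub (by rw [card_erase_of_mem h0F, hcF]; exact hcard)
    have hzR : z ∈ R := by rw [hR, Multiset.mem_toFinset, mem_nthRoots hh]; exact hpow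
    rw [← heq] at hzR
    exact ((hFe z).1 hzR).1
  intro z hz
  apply claim2 _ (pow_ne_zero _ hz)
  rw [← pow_mul, Nat.div_mul_cancel hdvd]
  exact FiniteField.pow_card_sub_one_eq_one z hz


lemma auxZero {L : Type*} [Field L] [Fintype L] (σ : L ≃+* L) (η : L)
    (c₁ c₂ c₃ c₄ : L → L)
    (hadd : ∀ a b : L, ∀ x : L × L,
      semilinMap σ c₁ c₂ c₃ c₄ a x + semilinMap σ c₁ c₂ c₃ c₄ b x
        = semilinMap σ c₁ c₂ c₃ c₄ (a + b) x)
    (y1 : L) (hy : (y1, (0:L)) ≠ 0) :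
      Function.Bijective (fun x : L × L =>
        y1 • x + η • semilinMap σ c₁ c₂ c₃ c₄ 0 x +
          ((σ.symm (c₄ 0) * σ.symm x.1 - σ.symm (c₂ 0) * σ.symm x.2,
            -(σ.symm (c₃ 0)) * σ.symm x.1 + σ.symm (c₁ 0) * σ.symm x.2) : L × L)) := by
  classical
  have hz : ∀ x : L × L, semilinMap σ c₁ c₂ c₃ c₄ 0 x = 0 := by
    intro x
    have h := hadd 0 0 x
    rw [add_zero] at h
    have := add_right_cancel (a := semilinMap σ c₁ c₂ c₃ c₄ 0 x)
      (b := semilinMap σ c₁ c₂ c₃ c₄ 0 x) (c := 0)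
    exact this (by rw [zero_add]; exact h)
  have h10 := hz (1, 0)
  have h01 := hz (0, 1)
  simp only [semilinMap, map_one, map_zero, mul_one, mul_zero, add_zero, zero_add,
    Prod.mk_eq_zero] at h10 h01
  obtain ⟨e1, e3⟩ := h10
  obtain ⟨e2, e4⟩ := h01
  have hy1 : y1 ≠ 0 := by
    intro h; exact hy (by simp [h, Prod.ext_iff])
  have hfe : (fun x : L × L =>
        y1 • x + η • semilinMap σ c₁ c₂ c₃ c₄ 0 x +
          ((σ.symm (c₄ 0) * σ.symm x.1 - σ.symm (c₂ 0) * σ.symm x.2,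
            -(σ.symm (c₃ 0)) * σ.symm x.1 + σ.symm (c₁ 0) * σ.symm x.2) : L × L))
      = fun x : L × L => y1 • x := by
    funext x
    rw [hz x]
    simp [e1, e2, e3, e4]
  rw [hfe]
  constructor
  · intro u v h
    have := congrArg (fun w => y1⁻¹ • w) h
    simpa [smul_smul, inv_mul_cancel₀ hy1] using this
  · intro z
    exact ⟨y1⁻¹ • z, by simp [smul_smul, mul_inv_cancel₀ hy1]⟩


lemma auxCore {L : Type*} [Field L] [Fintype L] (σ : L ≃+* L) (η : L)
    (hη : η ^ ((Fintype.card L - 1) / (Nat.card {x : L // σ x = x} - 1)) ≠ 1)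
    (c₁ c₂ c₃ c₄ : L → L)
    (hdet : ∀ a : L, a ≠ 0 → c₁ a * c₄ a - c₂ a * c₃ a ≠ 0)
    (hirr : ∀ a : L, a ≠ 0 → ∀ W : Submodule L (L × L),
      (∀ v ∈ W, semilinMap σ c₁ c₂ c₃ c₄ a v ∈ W) → W = ⊥ ∨ W = ⊤)
    (y1 a : L) (ha : a ≠ 0) :
    ∀ x : L × L,
      y1 • x + η • semilinMap σ c₁ c₂ c₃ c₄ a x +
          ((σ.symm (c₄ a) * σ.symm x.1 - σ.symm (c₂ a) * σ.symm x.2,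
            -(σ.symm (c₃ a)) * σ.symm x.1 + σ.symm (c₁ a) * σ.symm x.2) : L × L) = 0
      → x = 0 := by
  classical
  intro x hx0
  by_contra hx
  set A := c₁ a with hA
  set B := c₂ a with hB
  set C := c₃ a with hC
  set D := c₄ a with hD
  have hΔ : A * D - B * C ≠ 0 := hdet a ha
  -- component equations
  have hx1 : y1 * x.1 + η * (A * σ x.1 + B * σ x.2)
      + (σ.symm D * σ.symm x.1 - σ.symm B * σ.symm x.2) = 0 := by
    have := congrArg Prod.fst hx0
    simpa [semilinMap, Prod.fst_add, smul_eq_mul] using this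
  have hx2 : y1 * x.2 + η * (C * σ x.1 + D * σ x.2)
      + (-(σ.symm C) * σ.symm x.1 + σ.symm A * σ.symm x.2) = 0 := by
    have := congrArg Prod.snd hx0
    simpa [semilinMap, Prod.snd_add, smul_eq_mul] using this
  -- apply σ
  have s1 := congrArg σ hx1
  have s2 := congrArg σ hx2
  simp only [map_add, map_mul, map_sub, map_neg, map_zero,
    RingEquiv.apply_symm_apply] at s1 s2
  -- trinomial equations
  have E1 : (A * D - B * C) * x.1 + σ y1 * (A * σ x.1 + B * σ x.2)
      + σ η * (A * (σ A * σ (σ x.1) + σ B * σ (σ x.2))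
        + B * (σ C * σ (σ x.1) + σ D * σ (σ x.2))) = 0 := by
    linear_combination A * s1 + B * s2
  have E2 : (A * D - B * C) * x.2 + σ y1 * (C * σ x.1 + D * σ x.2)
      + σ η * (C * (σ A * σ (σ x.1) + σ B * σ (σ x.2))
        + D * (σ C * σ (σ x.1) + σ D * σ (σ x.2))) = 0 := by
    linear_combination C * s1 + D * s2
  -- dependence case is impossible
  have hdep : ∀ l : L, semilinMap σ c₁ c₂ c₃ c₄ a x ≠ l • x := by
    intro l hl
    have hW := hirr a ha (Submodule.span L {x}) ?_
    · rcases hW with hW | hW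
      · have hxmem := Submodule.mem_span_singleton_self (R := L) (M := L × L) x
        rw [hW, Submodule.mem_bot] at hxmem
        exact hx hxmem
      · rcases eq_or_ne x.1 0 with h1 | h1
        · have hmem : ((1 : L), (0 : L)) ∈ Submodule.span L {x} := by
            rw [hW]; exact Submodule.mem_top
          rw [Submodule.mem_span_singleton] at hmem
          obtain ⟨k, hk⟩ := hmem
          have hk1 := congrArg Prod.fst hk
          simp only [Prod.smul_fst, smul_eq_mul, h1, mul_zero] at hk1
          exact zero_ne_one hk1
        · have hmem : ((0 : L), (1 : L)) ∈ Submodule.span L {x} := by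
            rw [hW]; exact Submodule.mem_top
          rw [Submodule.mem_span_singleton] at hmem
          obtain ⟨k, hk⟩ := hmem
          have hk1 := congrArg Prod.fst hk
          have hk2 := congrArg Prod.snd hk
          simp only [Prod.smul_fst, Prod.smul_snd, smul_eq_mul] at hk1 hk2
          rcases mul_eq_zero.1 hk1 with hk0 | hx10
          · rw [hk0, zero_mul] at hk2; exact zero_ne_one hk2
          · exact h1 hx10
    · intro v hv
      rw [Submodule.mem_span_singleton] at hv ⊢
      obtain ⟨k, rfl⟩ := hv
      refine ⟨σ k * l, ?_⟩
      have : semilinMap σ c₁ c₂ c₃ c₄ a (k • x) = σ k • semilinMap σ c₁ c₂ c₃ c₄ a x := by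
        simp only [semilinMap, Prod.smul_fst, Prod.smul_snd, smul_eq_mul, map_mul,
          Prod.smul_mk, Prod.mk.injEq]
        constructor <;> ring
      rw [this, hl, smul_smul]
  -- η ≠ 0
  have hη0 : η ≠ 0 := by
    intro h
    subst h
    simp only [map_zero, zero_mul, add_zero] at E1 E2
    rcases eq_or_ne (σ y1) 0 with hy0 | hy0
    · rw [hy0] at E1 E2
      simp only [zero_mul, add_zero] at E1 E2
      have h1 : x.1 = 0 := by
        rcases mul_eq_zero.1 E1 with h | h
        · exact absurd h hΔ
        · exact h
      have h2 : x.2 = 0 := by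
        rcases mul_eq_zero.1 E2 with h | h
        · exact absurd h hΔ
        · exact h
      exact hx (Prod.ext h1 h2)
    · apply hdep (-(A * D - B * C) / σ y1)
      apply Prod.ext
      · show A * σ x.1 + B * σ x.2 = _ * x.1
        rw [div_mul_eq_mul_div, eq_div_iff hy0]
        linear_combination E1
      · show C * σ x.1 + D * σ x.2 = _ * x.2
        rw [div_mul_eq_mul_div, eq_div_iff hy0]
        linear_combination E2
  have hση : σ η ≠ 0 := fun h => hη0 (by simpa using congrArg σ.symm h)
  -- the determinant of the basis (x, Tx)
  set d := x.1 * (C * σ x.1 + D * σ x.2) - x.2 * (A * σ x.1 + B * σ x.2) with hd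
  have hd0 : d ≠ 0 := by
    intro hd0
    rw [hd] at hd0
    rcases eq_or_ne x.1 0 with h1 | h1
    · have h2 : x.2 ≠ 0 := fun h2 => hx (Prod.ext h1 h2)
      apply hdep ((C * σ x.1 + D * σ x.2) / x.2)
      apply Prod.ext
      · show A * σ x.1 + B * σ x.2 = _ * x.1
        rw [div_mul_eq_mul_div, eq_div_iff h2]
        linear_combination -hd0
      · show C * σ x.1 + D * σ x.2 = _ * x.2
        rw [div_mul_cancel₀ _ h2]
    · apply hdep ((A * σ x.1 + B * σ x.2) / x.1)
      apply Prod.ext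
      · show A * σ x.1 + B * σ x.2 = _ * x.1
        rw [div_mul_cancel₀ _ h1]
      · show C * σ x.1 + D * σ x.2 = _ * x.2
        rw [div_mul_eq_mul_div, eq_div_iff h1]
        linear_combination hd0
  -- key identity
  have hσd : σ d = σ x.1 * (σ C * σ (σ x.1) + σ D * σ (σ x.2))
      - σ x.2 * (σ A * σ (σ x.1) + σ B * σ (σ x.2)) := by
    rw [hd]; simp only [map_sub, map_mul, map_add]
  have key : σ η * σ d = d := by
    apply mul_left_cancel₀ hΔ
    rw [hσd, hd]
    linear_combination (A * σ x.1 + B * σ x.2) * E2 - (C * σ x.1 + D * σ x.2) * E1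
  have hηd : η * d = σ.symm d := by
    apply σ.injective
    rw [map_mul, key, RingEquiv.apply_symm_apply]
  -- conclude η^E = 1
  apply hη
  have hηeq : η = σ.symm d / d := by
    rw [eq_div_iff hd0]
    exact hηd
  have hfix := auxFixedPow σ d hd0
  have hsymm : σ.symm (d ^ ((Fintype.card L - 1) / (Nat.card {x : L // σ x = x} - 1)))
      = d ^ ((Fintype.card L - 1) / (Nat.card {x : L // σ x = x} - 1)) := by
    rw [← hfix, RingEquiv.symm_apply_apply, hfix]
  rw [hηeq, div_pow, ← map_pow, hsymm, div_self (pow_ne_zero _ hd0)]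


theorem stmt_18 {L : Type*} [Field L] [Fintype L] (σ : L ≃+* L) (η : L)
    (hη : η ^ ((Fintype.card L - 1) / (Nat.card {x : L // σ x = x} - 1)) ≠ 1)
    (c₁ c₂ c₃ c₄ : L → L)
    (hadd : ∀ a b : L, ∀ x : L × L,
      semilinMap σ c₁ c₂ c₃ c₄ a x + semilinMap σ c₁ c₂ c₃ c₄ b x
        = semilinMap σ c₁ c₂ c₃ c₄ (a + b) x)
    (hdet : ∀ a : L, a ≠ 0 → c₁ a * c₄ a - c₂ a * c₃ a ≠ 0)
    (hirr : ∀ a : L, a ≠ 0 → ∀ W : Submodule L (L × L),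
      (∀ v ∈ W, semilinMap σ c₁ c₂ c₃ c₄ a v ∈ W) → W = ⊥ ∨ W = ⊤) :
    ∀ y : L × L, y ≠ 0 →
      Function.Bijective (fun x : L × L =>
        y.1 • x + η • semilinMap σ c₁ c₂ c₃ c₄ y.2 x +
          ((σ.symm (c₄ y.2) * σ.symm x.1 - σ.symm (c₂ y.2) * σ.symm x.2,
            -(σ.symm (c₃ y.2)) * σ.symm x.1 + σ.symm (c₁ y.2) * σ.symm x.2) : L × L)) := by
  classical
  intro y hy
  by_cases ha : y.2 = 0
  · rw [ha]
    apply auxZero σ η c₁ c₂ c₃ c₄ hadd y.1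
    intro h
    apply hy
    apply Prod.ext
    · simpa using congrArg Prod.fst h
    · simpa using ha
  · have hcore := auxCore σ η hη c₁ c₂ c₃ c₄ hdet hirr y.1 y.2 ha
    have hinj : Function.Injective (fun x : L × L =>
        y.1 • x + η • semilinMap σ c₁ c₂ c₃ c₄ y.2 x +
          ((σ.symm (c₄ y.2) * σ.symm x.1 - σ.symm (c₂ y.2) * σ.symm x.2,
            -(σ.symm (c₃ y.2)) * σ.symm x.1 + σ.symm (c₁ y.2) * σ.symm x.2) : L × L)) := by
      intro u v huv
      simp only at huv
      have h1 := congrArg Prod.fst huv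
      have h2 := congrArg Prod.snd huv
      simp only [semilinMap, Prod.fst_add, Prod.snd_add, Prod.smul_fst, Prod.snd_add,
        Prod.smul_snd, smul_eq_mul] at h1 h2
      have hz := hcore (u - v) ?_
      · exact sub_eq_zero.1 hz
      apply Prod.ext
      · simp only [semilinMap, Prod.fst_add, Prod.smul_fst, smul_eq_mul, Prod.fst_sub,
          Prod.snd_sub, map_sub, Prod.fst_zero]
        linear_combination h1
      · simp only [semilinMap, Prod.snd_add, Prod.smul_snd, smul_eq_mul, Prod.fst_sub,
          Prod.snd_sub, map_sub, Prod.snd_zero]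
        linear_combination h2
    exact Finite.injective_iff_bijective.1 hinj
end

section
/- Let L = F_{p^m}, σ and τ automorphisms of L, α ∈ L* such that for every a ∈ L* the σ-semilinear map T_a(x₀, x₁) = (a·α·σ(x₁), τ(a)·σ(x₀)) is irreducible on L². Define on V = L² the multiplication (x₀, x₁) ∘ (y₀, y₁) = y₀·(x₀, x₁) + T_{y₁}(x₀, x₁) (with T_0 = 0). Then (V, +, ∘) has no zero divisors: x ∘ y = 0 implies x = 0 or y = 0. -/
theorem stmt_19 {L : Type*} [Field L] [Fintype L] (σ τ : L ≃+* L) (α : L) (hα : α ≠ 0)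
    (hirr : ∀ a : L, a ≠ 0 → ∀ W : Submodule L (L × L),
      (∀ v ∈ W, ((a * α * σ v.2, τ a * σ v.1) : L × L) ∈ W) → W = ⊥ ∨ W = ⊤) :
    ∀ x y : L × L,
      y.1 • x + ((y.2 * α * σ x.2, τ y.2 * σ x.1) : L × L) = 0 →
      x = 0 ∨ y = 0 := by
  intro x y h
  by_cases hy2 : y.2 = 0
  · by_cases hy1 : y.1 = 0
    · exact Or.inr (Prod.ext hy1 hy2)
    · left
      simp only [hy2, zero_mul, map_zero] at h
      have h' : y.1 • x = 0 := by
        have := h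
        rw [show ((0:L), (0:L)) = (0 : L × L) from rfl, add_zero] at this
        exact this
      exact (smul_eq_zero.mp h').resolve_left hy1
  · by_cases hx : x = 0
    · exact Or.inl hx
    · exfalso
      have hT : ((y.2 * α * σ x.2, τ y.2 * σ x.1) : L × L) = (-y.1) • x := by
        have : ((y.2 * α * σ x.2, τ y.2 * σ x.1) : L × L) = -(y.1 • x) := by
          rw [eq_neg_iff_add_eq_zero, add_comm]; exact h
        rw [this, neg_smul]
      have hinv : ∀ v ∈ Submodule.span L {x},
          ((y.2 * α * σ v.2, τ y.2 * σ v.1) : L × L) ∈ Submodule.span L {x} := by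
        intro v hv
        obtain ⟨c, rfl⟩ := Submodule.mem_span_singleton.mp hv
        have : ((y.2 * α * σ (c • x).2, τ y.2 * σ (c • x).1) : L × L)
            = (σ c * (-y.1)) • x := by
          have h1 : (c • x).1 = c * x.1 := rfl
          have h2 : (c • x).2 = c * x.2 := rfl
          rw [h1, h2, map_mul, map_mul]
          have : ((y.2 * α * (σ c * σ x.2), τ y.2 * (σ c * σ x.1)) : L × L)
              = σ c • ((y.2 * α * σ x.2, τ y.2 * σ x.1) : L × L) := by
            simp [Prod.smul_def, smul_eq_mul]; constructor <;> ring
          rw [this, hT, smul_smul]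
        rw [this]
        exact Submodule.smul_mem _ _ (Submodule.mem_span_singleton_self x)
      rcases hirr y.2 hy2 _ hinv with hbot | htop
      · exact hx (by simpa [hbot] using Submodule.mem_span_singleton_self (R := L) x)
      · have h1 : Module.finrank L (Submodule.span L {x}) = 1 :=
          finrank_span_singleton (K := L) hx
        have h2 : Module.finrank L (L × L) = 2 := by
          simp [Module.finrank_prod]
        rw [htop, finrank_top] at h1
        omega
end
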